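/- For every integer m ≥ 0, U_m(x) = Σ_{k=0}^{m} P_k(x) · P_{m-k}(x) as polynomials, where P_k denotes the k-th Legendre polynomial. -/

import Mathlib

open Polynomial Finset

/-- The `n`-th Legendre polynomial, via the Rodrigues formula. -/
noncomputable def legendre (n : ℕ) : ℝ[X] :=
  Polynomial.C ((2 ^ n * n.factorial : ℝ)⁻¹) * Polynomial.derivative^[n] ((X ^ 2 - 1) ^ n)

namespace LegendreAux

noncomputable def aP (n : ℕ) : ℝ[X] := Polynomial.derivative^[n] ((X ^ 2 - 1) ^ n)

lemma legendre_eq (n : ℕ) : legendre n = Polynomial.C ((2 ^ n * n.factorial : ℝ)⁻¹) * aP n :=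
  rfl

lemma iter_add (n : ℕ) (p q : ℝ[X]) :
    derivative^[n] (p + q) = derivative^[n] p + derivative^[n] q := by
  induction n generalizing p q with
  | zero => simp
  | succ n ih => simp [Function.iterate_succ_apply, derivative_add, ih]

lemma C_two : (Polynomial.C (2 : ℝ)) = (2 : ℝ[X]) := by
  have := Polynomial.C_eq_natCast (R := ℝ) 2
  push_cast at this ⊢
  exact this

lemma C_four : (Polynomial.C (4 : ℝ)) = (4 : ℝ[X]) := by
  have := Polynomial.C_eq_natCast (R := ℝ) 4
  push_cast at this ⊢
  exact this

lemma dy (n : ℕ) :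
    derivative (((X : ℝ[X]) ^ 2 - 1) ^ (n + 1)) =
      Polynomial.C (2 * (n : ℝ) + 2) * (X * ((X : ℝ[X]) ^ 2 - 1) ^ n) := by
  rw [derivative_pow]
  have h : derivative ((X : ℝ[X]) ^ 2 - 1) = 2 * X := by
    simp [derivative_sub, derivative_X_pow, C_two, one_add_one_eq_two]
  rw [h]
  simp only [Nat.add_sub_cancel, map_add, map_mul, C_two, Polynomial.C_eq_natCast]
  push_cast
  ring

lemma L1 (n : ℕ) (p : ℝ[X]) :
    derivative^[n + 1] (X * p) =
      X * derivative^[n + 1] p + ((n : ℝ[X]) + 1) * derivative^[n] p := by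
  induction n generalizing p with
  | zero => simp [derivative_mul]; ring
  | succ n ih =>
    rw [Function.iterate_succ_apply]
    have hd : derivative (X * p) = p + X * derivative p := by
      simp [derivative_mul]
    rw [hd, iter_add, ih (derivative p), ← Function.iterate_succ_apply,
      ← Function.iterate_succ_apply]
    push_cast
    ring

lemma T (n : ℕ) (p : ℝ[X]) :
    derivative^[n + 2] (((X : ℝ[X]) ^ 2 - 1) * p) =
      ((X : ℝ[X]) ^ 2 - 1) * derivative^[n + 2] p +
        (2 * ((n : ℝ[X]) + 2)) * X * derivative^[n + 1] p +
        (((n : ℝ[X]) + 2) * ((n : ℝ[X]) + 1)) * derivative^[n] p := by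
  induction n generalizing p with
  | zero =>
    have hd : derivative (((X : ℝ[X]) ^ 2 - 1) * p) =
        2 * X * p + ((X : ℝ[X]) ^ 2 - 1) * derivative p := by
      simp [derivative_mul, derivative_X_pow, C_two, one_add_one_eq_two]
    show derivative (derivative (((X : ℝ[X]) ^ 2 - 1) * p)) = _
    rw [hd]
    simp [derivative_mul, derivative_X_pow, C_two]
    ring
  | succ n ih =>
    rw [Function.iterate_succ_apply]
    have hd : derivative (((X : ℝ[X]) ^ 2 - 1) * p) =
        2 * (X * p) + ((X : ℝ[X]) ^ 2 - 1) * derivative p := by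
      simp [derivative_mul, derivative_X_pow, C_two]
      ring
    rw [hd, iter_add, ih (derivative p)]
    have h2 : derivative^[n + 2] (2 * (X * p)) = 2 * derivative^[n + 2] (X * p) := by
      rw [← C_two, iterate_derivative_C_mul]
    rw [h2, L1 (n + 1) p, ← Function.iterate_succ_apply, ← Function.iterate_succ_apply,
      ← Function.iterate_succ_apply]
    push_cast
    ring

lemma rec1 (n : ℕ) :
    aP (n + 2) = Polynomial.C (2 * (n : ℝ) + 4) *
      (X * aP (n + 1) + ((n : ℝ[X]) + 1) * derivative^[n] (((X : ℝ[X]) ^ 2 - 1) ^ (n + 1))) := by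
  show derivative^[n + 2] (((X : ℝ[X]) ^ 2 - 1) ^ (n + 2)) = _
  rw [Function.iterate_succ_apply, dy (n + 1), iterate_derivative_C_mul, L1 n]
  have : aP (n + 1) = derivative^[n + 1] (((X : ℝ[X]) ^ 2 - 1) ^ (n + 1)) := rfl
  rw [← this]
  push_cast
  ring

lemma rec2 (n : ℕ) :
    aP (n + 2) = ((X : ℝ[X]) ^ 2 - 1) * derivative (aP (n + 1)) +
      (2 * ((n : ℝ[X]) + 2)) * X * aP (n + 1) +
      (((n : ℝ[X]) + 2) * ((n : ℝ[X]) + 1)) * derivative^[n] (((X : ℝ[X]) ^ 2 - 1) ^ (n + 1)) := by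
  have hy : ((X : ℝ[X]) ^ 2 - 1) ^ (n + 2) = ((X : ℝ[X]) ^ 2 - 1) * ((X : ℝ[X]) ^ 2 - 1) ^ (n + 1) := by
    ring
  show derivative^[n + 2] (((X : ℝ[X]) ^ 2 - 1) ^ (n + 2)) = _
  rw [hy, T n]
  have h1 : derivative^[n + 2] (((X : ℝ[X]) ^ 2 - 1) ^ (n + 1)) = derivative (aP (n + 1)) := by
    rw [Function.iterate_succ_apply']
    rfl
  have h2 : derivative^[n + 1] (((X : ℝ[X]) ^ 2 - 1) ^ (n + 1)) = aP (n + 1) := rfl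
  rw [h1, h2]

lemma eqI : ∀ n : ℕ, aP (n + 1) =
    2 * ((n : ℝ[X]) + 1) * X * aP n + 2 * ((X : ℝ[X]) ^ 2 - 1) * derivative (aP n) := by
  intro n
  match n with
  | 0 =>
    have h0 : aP 0 = 1 := by simp [aP]
    have h1 : aP 1 = 2 * X := by
      show derivative (((X : ℝ[X]) ^ 2 - 1) ^ 1) = _
      simp [derivative_X_pow, C_two, one_add_one_eq_two]
    rw [h0, h1]
    simp
  | Nat.succ k =>
    have hC : (Polynomial.C (2 * (k : ℝ) + 4) : ℝ[X]) = 2 * (k : ℝ[X]) + 4 := by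
      push_cast [map_add, map_mul, C_two, C_four, Polynomial.C_eq_natCast]
      ring
    have e1 := rec1 k
    have e2 := rec2 k
    rw [hC] at e1
    push_cast
    linear_combination 2 * e2 - e1

lemma eqII (n : ℕ) : derivative (aP (n + 1)) =
    2 * ((n : ℝ[X]) + 1) * X * derivative (aP n) + 2 * ((n : ℝ[X]) + 1) ^ 2 * aP n := by
  have h1 : derivative (aP (n + 1)) = derivative^[n + 2] (((X : ℝ[X]) ^ 2 - 1) ^ (n + 1)) := by
    rw [Function.iterate_succ_apply']
    rfl
  rw [h1, Function.iterate_succ_apply, dy n, iterate_derivative_C_mul, L1 n]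
  have h2 : derivative^[n + 1] (((X : ℝ[X]) ^ 2 - 1) ^ n) = derivative (aP n) := by
    rw [Function.iterate_succ_apply']
    rfl
  have h3 : derivative^[n] (((X : ℝ[X]) ^ 2 - 1) ^ n) = aP n := rfl
  have hC : (Polynomial.C (2 * (n : ℝ) + 2) : ℝ[X]) = 2 * (n : ℝ[X]) + 2 := by
    push_cast [map_add, map_mul, C_two, C_four, Polynomial.C_eq_natCast]
    ring
  rw [h2, h3, hC]
  ring

lemma star (n : ℕ) :
    aP (n + 2) = 2 * (2 * (n : ℝ[X]) + 3) * X * aP (n + 1) - 4 * ((n : ℝ[X]) + 1) ^ 2 * aP n := by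
  have e1 := eqI (n + 1)
  have e2 := eqII n
  have e3 := eqI n
  push_cast at e1
  linear_combination e1 + 2 * ((X : ℝ[X]) ^ 2 - 1) * e2 - 2 * ((n : ℝ[X]) + 1) * X * e3

lemma legendre_rec (n : ℕ) :
    ((n : ℝ[X]) + 2) * legendre (n + 2) =
      (2 * (n : ℝ[X]) + 3) * X * legendre (n + 1) - ((n : ℝ[X]) + 1) * legendre n := by
  have hfac : ∀ k : ℕ, ((2 : ℝ) ^ k * k.factorial) ≠ 0 := fun k => by
    positivity
  have hA : ((n : ℝ) + 2) * (2 ^ (n + 2) * (n + 2).factorial : ℝ)⁻¹ * 2 =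
      (2 ^ (n + 1) * (n + 1).factorial : ℝ)⁻¹ := by
    rw [Nat.factorial_succ (n + 1)]
    field_simp
    push_cast
    ring
  have hB : ((n : ℝ) + 2) * (2 ^ (n + 2) * (n + 2).factorial : ℝ)⁻¹ * (4 * ((n : ℝ) + 1) ^ 2) =
      ((n : ℝ) + 1) * (2 ^ n * n.factorial : ℝ)⁻¹ := by
    rw [Nat.factorial_succ (n + 1), Nat.factorial_succ n]
    field_simp
    push_cast
    ring
  have hA' := congrArg Polynomial.C hA
  have hB' := congrArg Polynomial.C hB
  simp only [map_mul, map_add, map_pow, map_one, C_two, C_four,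
    Polynomial.C_eq_natCast] at hA' hB'
  rw [legendre_eq, legendre_eq, legendre_eq, star n]
  linear_combination (2 * (n : ℝ[X]) + 3) * X * aP (n + 1) * hA' - aP n * hB'

lemma legendre_zero : legendre 0 = 1 := by
  simp [legendre]

lemma legendre_one : legendre 1 = X := by
  have h1 : derivative^[1] (((X : ℝ[X]) ^ 2 - 1) ^ 1) = 2 * X := by
    show derivative (((X : ℝ[X]) ^ 2 - 1) ^ 1) = _
    simp [derivative_X_pow, C_two, one_add_one_eq_two]
  rw [legendre, h1]
  have : ((2 : ℝ) ^ 1 * Nat.factorial 1)⁻¹ = 2⁻¹ := by norm_num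
  rw [this]
  rw [show (Polynomial.C ((2 : ℝ)⁻¹) : ℝ[X]) * (2 * X) = (Polynomial.C ((2 : ℝ)⁻¹) * Polynomial.C 2) * X by
    push_cast [C_two]; ring]
  rw [← map_mul]
  norm_num

/-- The three-term recurrence in the shifted form used for the convolution. -/
lemma legendre_rec' (j : ℕ) :
    ((j : ℝ[X]) + 1) * legendre (j + 1) =
      (2 * (j : ℝ[X]) + 1) * X * legendre j - (j : ℝ[X]) * legendre (j - 1) := by
  match j with
  | 0 => simp [legendre_zero, legendre_one]
  | Nat.succ k =>
    have := legendre_rec k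
    push_cast
    push_cast at this
    linear_combination this

noncomputable def Conv (m : ℕ) : ℝ[X] := ∑ k ∈ Finset.range (m + 1), legendre k * legendre (m - k)

noncomputable def S (m : ℕ) : ℝ[X] :=
  ∑ k ∈ Finset.range (m + 1), (k : ℝ[X]) * legendre k * legendre (m - k)

lemma two_S (m : ℕ) : 2 * S m = (m : ℝ[X]) * Conv m := by
  have hrefl : S m = ∑ k ∈ Finset.range (m + 1),
      ((m - k : ℕ) : ℝ[X]) * legendre (m - k) * legendre k := by
    rw [S, ← Finset.sum_range_reflect (fun k => (k : ℝ[X]) * legendre k * legendre (m - k)) (m + 1)]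
    apply Finset.sum_congr rfl
    intro k hk
    have hk' : k ≤ m := Nat.lt_succ_iff.mp (Finset.mem_range.mp hk)
    simp only [Nat.succ_sub_one, Nat.add_sub_cancel]
    rw [Nat.sub_sub_self hk']
  rw [two_mul]
  nth_rewrite 2 [hrefl]
  rw [S, Conv, ← Finset.sum_add_distrib, Finset.mul_sum]
  apply Finset.sum_congr rfl
  intro k hk
  have hk' : k ≤ m := Nat.lt_succ_iff.mp (Finset.mem_range.mp hk)
  have hc : ((m - k : ℕ) : ℝ[X]) = (m : ℝ[X]) - (k : ℝ[X]) := by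
    push_cast [Nat.cast_sub hk']
    ring
  rw [hc]
  ring

theorem conv_rec (m : ℕ) : Conv (m + 2) = 2 * X * Conv (m + 1) - Conv m := by
  have h1 := two_S m
  have h2 := two_S (m + 1)
  have h3 := two_S (m + 2)
  have e0 : S (m + 2) = ∑ j ∈ Finset.range (m + 2),
      ((j : ℝ[X]) + 1) * legendre (j + 1) * legendre (m + 1 - j) := by
    rw [S, Finset.sum_range_succ' _ (m + 2)]
    simp only [Nat.cast_zero, zero_mul, add_zero]
    apply Finset.sum_congr rfl
    intro j _
    have : m + 2 - (j + 1) = m + 1 - j := by omega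
    rw [this]
    push_cast
    ring
  have e1 : S (m + 2) = ∑ j ∈ Finset.range (m + 2),
      (((2 * (j : ℝ[X]) + 1) * X * legendre j - (j : ℝ[X]) * legendre (j - 1)) *
        legendre (m + 1 - j)) := by
    rw [e0]
    apply Finset.sum_congr rfl
    intro j _
    rw [legendre_rec' j]
  have e2 : ∑ j ∈ Finset.range (m + 2), (j : ℝ[X]) * legendre (j - 1) * legendre (m + 1 - j)
      = S m + Conv m := by
    rw [Finset.sum_range_succ' _ (m + 1)]
    simp only [Nat.cast_zero, zero_mul, add_zero]
    rw [S, Conv, ← Finset.sum_add_distrib]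
    apply Finset.sum_congr rfl
    intro i _
    have ha : i + 1 - 1 = i := by omega
    have hb : m + 1 - (i + 1) = m - i := by omega
    rw [ha, hb]
    push_cast
    ring
  have e3 : X * (2 * S (m + 1) + Conv (m + 1)) = ∑ j ∈ Finset.range (m + 2),
      (2 * (j : ℝ[X]) + 1) * X * legendre j * legendre (m + 1 - j) := by
    simp only [S, Conv, Finset.mul_sum, ← Finset.sum_add_distrib]
    apply Finset.sum_congr rfl
    intro j _
    ring
  have key2 : S (m + 2) = X * (2 * S (m + 1) + Conv (m + 1)) - (S m + Conv m) := by
    rw [e1, e3, ← e2, ← Finset.sum_sub_distrib]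
    apply Finset.sum_congr rfl
    intro j _
    ring
  have hnz : ((m : ℝ[X]) + 2) ≠ 0 := by
    have hC : ((m : ℝ[X]) + 2) = Polynomial.C ((m : ℝ) + 2) := by
      push_cast [map_add, C_two, Polynomial.C_eq_natCast]
      ring
    rw [hC, Ne, Polynomial.C_eq_zero]
    positivity
  apply mul_left_cancel₀ hnz
  push_cast at h2 h3
  linear_combination -h3 + 2 * key2 + 2 * X * h2 - h1

end LegendreAux

theorem chebyshevU_eq_legendre_convolution (m : ℕ) :
    Polynomial.Chebyshev.U ℝ m = ∑ k ∈ Finset.range (m + 1), legendre k * legendre (m - k) := by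
  show _ = LegendreAux.Conv m
  induction m using Nat.twoStepInduction with
  | zero =>
    simp [LegendreAux.Conv, LegendreAux.legendre_zero, Polynomial.Chebyshev.U_zero]
  | one =>
    have : ((1 : ℕ) : ℤ) = 1 := by norm_num
    rw [this, Polynomial.Chebyshev.U_one]
    simp [LegendreAux.Conv, Finset.sum_range_succ, LegendreAux.legendre_zero,
      LegendreAux.legendre_one]
    ring
  | more n ih1 ih2 =>
    have hcast : ((n + 2 : ℕ) : ℤ) = (n : ℤ) + 2 := by push_cast; ring
    have hcast1 : ((n + 1 : ℕ) : ℤ) = (n : ℤ) + 1 := by push_cast; ring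
    rw [hcast, Polynomial.Chebyshev.U_add_two, LegendreAux.conv_rec n, ← hcast1, ih1, ih2]
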